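/- Assume the coercivity condition (C), the monotonicity assumption (M) and assumption (E). For λ > 0 let v^λ = (v^λ_i)_{i∈𝕀} be the unique viscosity solution of (P_λ). Then there exists a constant C₀ > 0 such that |v^λ_i(x)| ≤ C₀ for every λ > 0, every x ∈ 𝕋ⁿ and every i ∈ 𝕀. -/

import Mathlib

open MeasureTheory Filter Topology RealInnerProductSpace

noncomputable section

/-- Euclidean space ℝⁿ, the universal cover of the flat torus 𝕋ⁿ = ℝⁿ/ℤⁿ. -/
abbrev Euc (n : ℕ) := EuclideanSpace ℝ (Fin n)

/-- A vector of ℝⁿ with integer coordinates (an element of ℤⁿ). -/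
def IsIntVec {n : ℕ} (z : Euc n) : Prop := ∀ i, ∃ k : ℤ, z i = (k : ℝ)

/-- ℤⁿ-periodic functions on ℝⁿ: these represent functions on the torus 𝕋ⁿ. -/
def TorusFun {n : ℕ} {α : Type*} (f : Euc n → α) : Prop :=
  ∀ (x z : Euc n), IsIntVec z → f (x + z) = f x

/-- Functions on 𝕋ⁿ × Ξ, i.e. ℤⁿ-periodic in the first variable. -/
def TorusFun2 {n : ℕ} {Ξ : Type*} {α : Type*} (f : Euc n × Ξ → α) : Prop :=
  ∀ (x z : Euc n) (ξ : Ξ), IsIntVec z → f (x + z, ξ) = f (x, ξ)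

/-- The Hamiltonian H_{φ,i}(x,p) = sup_{ξ∈Ξ} (−g_i(x,ξ)·p − φ_i(x,ξ)). -/
def ham {n m : ℕ} {Ξ : Type*} (g : Fin m → Euc n × Ξ → Euc n)
    (φ : Fin m → Euc n × Ξ → ℝ) (i : Fin m) (x p : Euc n) : ℝ :=
  ⨆ ξ : Ξ, (-⟪g i (x, ξ), p⟫ - φ i (x, ξ))

/-- The data g = (g_i), L = (L_i) consist of continuous functions on 𝕋ⁿ × Ξ. -/
def GoodData {n m : ℕ} {Ξ : Type*} [TopologicalSpace Ξ]
    (g : Fin m → Euc n × Ξ → Euc n) (L : Fin m → Euc n × Ξ → ℝ) : Prop :=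
  (∀ i, Continuous (g i) ∧ TorusFun2 (g i)) ∧ (∀ i, Continuous (L i) ∧ TorusFun2 (L i))

/-- Coercivity (C): min_{x∈𝕋ⁿ} H_i(x,p) → ∞ as |p| → ∞. -/
def Coercive {n m : ℕ} {Ξ : Type*} (g : Fin m → Euc n × Ξ → Euc n)
    (L : Fin m → Euc n × Ξ → ℝ) : Prop :=
  ∀ (i : Fin m) (M : ℝ), ∃ R : ℝ, ∀ p : Euc n, R ≤ ‖p‖ → ∀ x : Euc n, M ≤ ham g L i x p

/-- A monotone m×m real matrix. -/
def IsMonotoneMat {m : ℕ} (B : Matrix (Fin m) (Fin m) ℝ) : Prop :=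
  ∀ (u : Fin m → ℝ) (k : Fin m), (∀ i, u i ≤ u k) → 0 ≤ u k → 0 ≤ ∑ j, B k j * u j

/-- Assumption (M): B(x) has continuous entries (as functions on 𝕋ⁿ) and is monotone
for every x. -/
def GoodCoupling {n m : ℕ} (B : Euc n → Matrix (Fin m) (Fin m) ℝ) : Prop :=
  (∀ i j, Continuous (fun x => B x i j) ∧ TorusFun (fun x => B x i j)) ∧
    ∀ x, IsMonotoneMat (B x)

/-- Viscosity subsolution of λu + Bu + H_φ[u] = c in 𝕋ⁿ. -/
def IsSubsol {n m : ℕ} {Ξ : Type*} (B : Euc n → Matrix (Fin m) (Fin m) ℝ) (lam : ℝ)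
    (g : Fin m → Euc n × Ξ → Euc n) (φ : Fin m → Euc n × Ξ → ℝ)
    (c : Fin m → ℝ) (u : Fin m → Euc n → ℝ) : Prop :=
  (∀ i, UpperSemicontinuous (u i) ∧ TorusFun (u i)) ∧
    ∀ (i : Fin m) (ψ : Euc n → ℝ), ContDiff ℝ 1 ψ → TorusFun ψ →
      ∀ x : Euc n, IsLocalMax (fun y => u i y - ψ y) x →
        lam * u i x + (∑ j, B x i j * u j x) + ham g φ i x (gradient ψ x) ≤ c i

/-- Viscosity supersolution of λu + Bu + H_φ[u] = c in 𝕋ⁿ. -/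
def IsSupersol {n m : ℕ} {Ξ : Type*} (B : Euc n → Matrix (Fin m) (Fin m) ℝ) (lam : ℝ)
    (g : Fin m → Euc n × Ξ → Euc n) (φ : Fin m → Euc n × Ξ → ℝ)
    (c : Fin m → ℝ) (u : Fin m → Euc n → ℝ) : Prop :=
  (∀ i, LowerSemicontinuous (u i) ∧ TorusFun (u i)) ∧
    ∀ (i : Fin m) (ψ : Euc n → ℝ), ContDiff ℝ 1 ψ → TorusFun ψ →
      ∀ x : Euc n, IsLocalMin (fun y => u i y - ψ y) x →
        c i ≤ lam * u i x + (∑ j, B x i j * u j x) + ham g φ i x (gradient ψ x)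

/-- Viscosity solution of λu + Bu + H_φ[u] = c in 𝕋ⁿ. -/
def IsSol {n m : ℕ} {Ξ : Type*} (B : Euc n → Matrix (Fin m) (Fin m) ℝ) (lam : ℝ)
    (g : Fin m → Euc n × Ξ → Euc n) (φ : Fin m → Euc n × Ξ → ℝ)
    (c : Fin m → ℝ) (u : Fin m → Euc n → ℝ) : Prop :=
  (∀ i, Continuous (u i)) ∧ IsSubsol B lam g φ c u ∧ IsSupersol B lam g φ c u

/-- (φ,u) ∈ F(λ): φ ∈ C(𝕋ⁿ×Ξ)ᵐ, u ∈ C(𝕋ⁿ)ᵐ and u is a viscosity subsolution of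
B^λ u + H_φ[u] = 0 in 𝕋ⁿ. -/
def memF {n m : ℕ} {Ξ : Type*} [TopologicalSpace Ξ]
    (B : Euc n → Matrix (Fin m) (Fin m) ℝ) (lam : ℝ)
    (g : Fin m → Euc n × Ξ → Euc n)
    (φ : Fin m → Euc n × Ξ → ℝ) (u : Fin m → Euc n → ℝ) : Prop :=
  (∀ i, Continuous (φ i) ∧ TorusFun2 (φ i)) ∧ (∀ i, Continuous (u i)) ∧
    IsSubsol B lam g φ (fun _ => 0) u

/-- ρ_i(x) = Σ_j b_{ij}(x). -/
def rhoB {n m : ℕ} (B : Euc n → Matrix (Fin m) (Fin m) ℝ) (i : Fin m) (x : Euc n) : ℝ :=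
  ∑ j, B x i j

/-- ν ∈ P_{B^λ}: a family of finite nonnegative Borel measures with ⟨ν, B^λ1⟩ = 1. -/
def memPB {n m : ℕ} {Ξ : Type*} [MeasurableSpace Ξ]
    (B : Euc n → Matrix (Fin m) (Fin m) ℝ) (lam : ℝ)
    (ν : Fin m → Measure (Euc n × Ξ)) : Prop :=
  (∀ i, IsFiniteMeasure (ν i)) ∧
    (∑ i, ∫ q, (lam + rhoB B i q.1) ∂(ν i)) = 1

/-- ν ∈ G'(z,k,λ): ν ∈ P_{B^λ} and ⟨ν, φ − u_k(z) B^λ1⟩ ≥ 0 for every (φ,u) ∈ F(λ). -/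
def memGP {n m : ℕ} {Ξ : Type*} [TopologicalSpace Ξ] [MeasurableSpace Ξ]
    (B : Euc n → Matrix (Fin m) (Fin m) ℝ) (lam : ℝ)
    (g : Fin m → Euc n × Ξ → Euc n) (z : Euc n) (k : Fin m)
    (ν : Fin m → Measure (Euc n × Ξ)) : Prop :=
  memPB B lam ν ∧
    ∀ φ u, memF B lam g φ u →
      0 ≤ ∑ i, ∫ q, (φ i q - u k z * (lam + rhoB B i q.1)) ∂(ν i)

/-- μ ∈ P: a family of nonnegative Borel measures of total mass 1. -/
def memP {n m : ℕ} {Ξ : Type*} [MeasurableSpace Ξ]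
    (μ : Fin m → Measure (Euc n × Ξ)) : Prop :=
  (∀ i, IsFiniteMeasure (μ i)) ∧ (∑ i, (μ i Set.univ).toReal) = 1

/-- μ ∈ P(z,k,λ): μ ∈ P and Σ_i ⟨μ_i, (λ+ρ_i)⁻¹ φ_i⟩ ≥ u_k(z) for all (φ,u) ∈ F(λ). -/
def memPzk {n m : ℕ} {Ξ : Type*} [TopologicalSpace Ξ] [MeasurableSpace Ξ]
    (B : Euc n → Matrix (Fin m) (Fin m) ℝ) (lam : ℝ)
    (g : Fin m → Euc n × Ξ → Euc n) (z : Euc n) (k : Fin m)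
    (μ : Fin m → Measure (Euc n × Ξ)) : Prop :=
  memP μ ∧
    ∀ φ u, memF B lam g φ u →
      u k z ≤ ∑ i, ∫ q, (lam + rhoB B i q.1)⁻¹ * φ i q ∂(μ i)

/-- μ ∈ P(0): μ ∈ P and ⟨μ,φ⟩ ≥ 0 for all (φ,u) ∈ F(0). -/
def memP0 {n m : ℕ} {Ξ : Type*} [TopologicalSpace Ξ] [MeasurableSpace Ξ]
    (B : Euc n → Matrix (Fin m) (Fin m) ℝ)
    (g : Fin m → Euc n × Ξ → Euc n)
    (μ : Fin m → Measure (Euc n × Ξ)) : Prop :=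
  memP μ ∧ ∀ φ u, memF B 0 g φ u → 0 ≤ ∑ i, ∫ q, φ i q ∂(μ i)

/-- μ ∈ M₊(0): a family of finite nonnegative Borel measures with ⟨μ,φ⟩ ≥ 0 for all
(φ,u) ∈ F(0). -/
def memM0 {n m : ℕ} {Ξ : Type*} [TopologicalSpace Ξ] [MeasurableSpace Ξ]
    (B : Euc n → Matrix (Fin m) (Fin m) ℝ)
    (g : Fin m → Euc n × Ξ → Euc n)
    (μ : Fin m → Measure (Euc n × Ξ)) : Prop :=
  (∀ i, IsFiniteMeasure (μ i)) ∧ ∀ φ u, memF B 0 g φ u → 0 ≤ ∑ i, ∫ q, φ i q ∂(μ i)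

/-- Assumption (E): problem (P₀) has a Lipschitz continuous viscosity solution. -/
def AssumptionE {n m : ℕ} {Ξ : Type*} (B : Euc n → Matrix (Fin m) (Fin m) ℝ)
    (g : Fin m → Euc n × Ξ → Euc n) (L : Fin m → Euc n × Ξ → ℝ) : Prop :=
  ∃ v₀ : Fin m → Euc n → ℝ, (∀ i, ∃ K : NNReal, LipschitzWith K (v₀ i)) ∧
    IsSol B 0 g L (fun _ => 0) v₀

end



/-! ### Auxiliary lemmas -/

noncomputable section Aux

open Real

namespace Stmt14Aux

/-- The periodic penalty function. -/
def pen (t : ℝ) : ℝ := (1 - Real.cos (2*Real.pi*t)) / (2*Real.pi^2)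

lemma pen_zero : pen 0 = 0 := by simp [pen]

lemma pen_even (t : ℝ) : pen (-t) = pen t := by simp [pen, mul_neg, Real.cos_neg]

lemma pen_nonneg (t : ℝ) : 0 ≤ pen t := by
  have h1 : Real.cos (2*Real.pi*t) ≤ 1 := Real.cos_le_one _
  have h2 : (0:ℝ) < 2*Real.pi^2 := by positivity
  apply div_nonneg (by linarith) h2.le

lemma pen_int (t : ℝ) (k : ℤ) : pen (t + k) = pen t := by
  unfold pen
  congr 2
  have : 2*Real.pi*(t + k) = 2*Real.pi*t + k * (2*Real.pi) := by ring
  rw [this, Real.cos_add_int_mul_two_pi]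

lemma pen_eq_sin_sq (t : ℝ) : pen t = (Real.sin (Real.pi*t))^2 / Real.pi^2 := by
  unfold pen
  have : 2*Real.pi*t = 2*(Real.pi*t) := by ring
  rw [this, Real.cos_two_mul, Real.cos_sq']
  have hpi : Real.pi ≠ 0 := Real.pi_ne_zero
  field_simp; ring

lemma pen_lb {t : ℝ} (h : |t| ≤ 1/2) : 4/Real.pi^2 * t^2 ≤ pen t := by
  rw [pen_eq_sin_sq]
  have hpi : (0:ℝ) < Real.pi := Real.pi_pos
  have hsq : Real.sin (Real.pi*t)^2 = Real.sin (Real.pi*|t|)^2 := by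
    rcases abs_cases t with ⟨he, _⟩ | ⟨he, _⟩
    · rw [he]
    · rw [he]; simp [mul_neg, Real.sin_neg]
  have h1 : 2*|t| ≤ Real.sin (Real.pi*|t|) := by
    have := Real.mul_le_sin (x := Real.pi*|t|) (by positivity)
      (by nlinarith [abs_nonneg t])
    calc 2*|t| = 2/Real.pi * (Real.pi*|t|) := by field_simp
    _ ≤ _ := this
  have h2 : 4*t^2 ≤ Real.sin (Real.pi*t)^2 := by
    rw [hsq]
    nlinarith [abs_nonneg t, sq_abs t]
  have hp2 : (0:ℝ) < Real.pi^2 := by positivity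
  rw [div_mul_eq_mul_div, div_le_div_iff_of_pos_right hp2]
  nlinarith

lemma pen_hasDerivAt (t : ℝ) : HasDerivAt pen (Real.sin (2*Real.pi*t)/Real.pi) t := by
  have h1 : HasDerivAt (fun t : ℝ => 2*Real.pi*t) (2*Real.pi) t := by
    simpa using (hasDerivAt_id t).const_mul (2*Real.pi)
  have h2 : HasDerivAt (fun t : ℝ => Real.cos (2*Real.pi*t))
      (-Real.sin (2*Real.pi*t) * (2*Real.pi)) t :=
    (Real.hasDerivAt_cos (2*Real.pi*t)).comp t h1
  have h3 : HasDerivAt pen ((0 - (-Real.sin (2*Real.pi*t) * (2*Real.pi))) / (2*Real.pi^2)) t :=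
    ((hasDerivAt_const t 1).sub h2).div_const _
  convert h3 using 1
  have hpi : Real.pi ≠ 0 := Real.pi_ne_zero
  field_simp
  ring

lemma pen_contDiff : ContDiff ℝ 1 pen := by
  unfold pen
  exact ((contDiff_const.sub (Real.contDiff_cos.comp (contDiff_const.mul contDiff_id))).div_const _)

lemma pen_deriv_abs (t : ℝ) : |Real.sin (2*Real.pi*t)/Real.pi| ≤ 2*|t| := by
  have hpi : (0:ℝ) < Real.pi := Real.pi_pos
  rw [abs_div, abs_of_pos hpi, div_le_iff₀ hpi]
  calc |Real.sin (2*Real.pi*t)| ≤ |2*Real.pi*t| := Real.abs_sin_le_abs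
  _ = 2 * |t| * Real.pi := by rw [abs_mul, abs_mul, abs_of_pos hpi, abs_two]; ring

/-- Test function. -/
def tf {n : ℕ} (a : ℝ) (c : Euc n) : Euc n → ℝ :=
  fun x => a * ∑ j, pen (x j - c j)

/-- Its gradient. -/
def tg {n : ℕ} (a : ℝ) (c : Euc n) (x : Euc n) : Euc n :=
  WithLp.toLp 2 (fun j => a * (Real.sin (2*Real.pi*(x j - c j))/Real.pi))

lemma tf_contDiff {n : ℕ} (a : ℝ) (c : Euc n) : ContDiff ℝ 1 (tf a c) := by
  apply contDiff_const.mul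
  apply ContDiff.sum
  intro j _
  exact pen_contDiff.comp (((EuclideanSpace.proj j : Euc n →L[ℝ] ℝ)).contDiff.sub contDiff_const)

lemma tf_torus {n : ℕ} (a : ℝ) (c : Euc n) : TorusFun (tf a c) := by
  intro x z hz
  unfold tf
  congr 1
  apply Finset.sum_congr rfl
  intro j _
  obtain ⟨k, hk⟩ := hz j
  have : (x + z) j - c j = (x j - c j) + k := by
    have : (x + z) j = x j + z j := rfl
    rw [this, hk]; ring
  rw [this, pen_int]

lemma tf_hasGradientAt {n : ℕ} (a : ℝ) (c : Euc n) (x : Euc n) :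
    HasGradientAt (tf a c) (tg a c x) x := by
  rw [hasGradientAt_iff_hasFDerivAt]
  have hterm : ∀ j : Fin n, HasFDerivAt (fun y : Euc n => pen (y j - c j))
      ((Real.sin (2*Real.pi*(x j - c j))/Real.pi) • (EuclideanSpace.proj j : Euc n →L[ℝ] ℝ)) x := by
    intro j
    have hin : HasFDerivAt (fun y : Euc n => y j - c j)
        (EuclideanSpace.proj j : Euc n →L[ℝ] ℝ) x := by
      have := ((EuclideanSpace.proj j : Euc n →L[ℝ] ℝ).hasFDerivAt (x := x)).sub_const (c j)
      exact this
    exact (pen_hasDerivAt (x j - c j)).comp_hasFDerivAt x hin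
  have hsum : HasFDerivAt (fun y : Euc n => ∑ j, pen (y j - c j))
      (∑ j, (Real.sin (2*Real.pi*(x j - c j))/Real.pi) • (EuclideanSpace.proj j : Euc n →L[ℝ] ℝ)) x :=
    HasFDerivAt.fun_sum (fun j _ => hterm j)
  have hmul := hsum.const_mul a
  refine hmul.congr_fderiv ?_
  symm
  ext v
  simp only [InnerProductSpace.toDual_apply_apply, ContinuousLinearMap.smul_apply,
    ContinuousLinearMap.coe_sum', Finset.sum_apply, PiLp.proj_apply, smul_eq_mul]
  rw [PiLp.inner_apply]
  simp only [RCLike.inner_apply, starRingEnd_apply, star_trivial]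
  unfold tg
  rw [Finset.mul_sum]
  apply Finset.sum_congr rfl
  intro j _
  simp [PiLp.proj_apply]
  ring

lemma norm_le_of_coords {n : ℕ} (y : Euc n) (r : ℝ) (hr : 0 ≤ r)
    (h : ∀ j, |y j| ≤ r) : ‖y‖ ≤ Real.sqrt n * r := by
  rw [EuclideanSpace.norm_eq]
  have h1 : ∑ j, ‖y j‖^2 ≤ ∑ _j : Fin n, r^2 := by
    apply Finset.sum_le_sum
    intro j _
    rw [Real.norm_eq_abs]
    exact pow_le_pow_left₀ (abs_nonneg _) (h j) 2
  simp only [Finset.sum_const, Finset.card_univ, Fintype.card_fin, nsmul_eq_mul] at h1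
  calc Real.sqrt (∑ j, ‖y j‖^2) ≤ Real.sqrt (n * r^2) := Real.sqrt_le_sqrt h1
  _ = Real.sqrt n * r := by
      rw [Real.sqrt_mul (Nat.cast_nonneg n), Real.sqrt_sq hr]

lemma norm_sq_eq_sum {n : ℕ} (y : Euc n) : ‖y‖^2 = ∑ j, (y j)^2 := by
  rw [EuclideanSpace.norm_eq, Real.sq_sqrt]
  · apply Finset.sum_congr rfl; intro j _; rw [Real.norm_eq_abs, sq_abs]
  · positivity

lemma sqrt_nat_le {n : ℕ} (hn : 0 < n) : Real.sqrt n ≤ n := by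
  have hn1 : (1:ℝ) ≤ n := by exact_mod_cast hn
  have h2 : (n:ℝ) ≤ (n:ℝ)^2 := by nlinarith
  calc Real.sqrt n ≤ Real.sqrt ((n:ℝ)^2) := Real.sqrt_le_sqrt h2
  _ = n := Real.sqrt_sq (by positivity)

lemma exists_intvec_cube {n : ℕ} (hn : 0 < n) (x : Euc n) :
    ∃ z : Euc n, IsIntVec z ∧ ‖x + z‖ ≤ n := by
  let z : Euc n := WithLp.toLp 2 (fun j => -(⌊x j⌋ : ℝ))
  refine ⟨z, fun j => ⟨-⌊x j⌋, by push_cast; ring⟩, ?_⟩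
  have hc : ∀ j, |(x + z) j| ≤ 1 := by
    intro j
    have : (x + z) j = Int.fract (x j) := by
      show x j + -(⌊x j⌋:ℝ) = _
      rw [Int.fract]; ring
    rw [this, abs_of_nonneg (Int.fract_nonneg _)]
    exact (Int.fract_lt_one _).le
  calc ‖x + z‖ ≤ Real.sqrt n * 1 := norm_le_of_coords _ 1 zero_le_one hc
  _ ≤ n := by rw [mul_one]; exact sqrt_nat_le hn

lemma exists_intvec_round {n : ℕ} (x y : Euc n) :
    ∃ z : Euc n, IsIntVec z ∧ ∀ j, |x j - (y + z) j| ≤ 1/2 := by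
  let z : Euc n := WithLp.toLp 2 (fun j => (round (x j - y j) : ℝ))
  refine ⟨z, fun j => ⟨round (x j - y j), rfl⟩, fun j => ?_⟩
  have : x j - (y + z) j = (x j - y j) - round (x j - y j) := by
    show x j - (y j + (round (x j - y j) : ℝ)) = _; ring
  rw [this]
  exact abs_sub_round _

/-- Attainment of a global maximum for a periodic continuous family. -/
lemma exists_global_max {n m : ℕ} (hn : 0 < n) (hm : 0 < m)
    (F : Fin m → Euc n → Euc n → ℝ) (hF : ∀ i, Continuous fun p : Euc n × Euc n => F i p.1 p.2)
    (hper : ∀ i x y zx zy, IsIntVec zx → IsIntVec zy → F i (x+zx) (y+zy) = F i x y) :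
    ∃ k : Fin m, ∃ a b : Euc n, ‖a‖ ≤ n ∧ ‖b‖ ≤ 2*n ∧ (∀ j, |a j - b j| ≤ 1/2) ∧
      ∀ i x y, F i x y ≤ F k a b := by
  have hiz : IsIntVec (0 : Euc n) := fun j => ⟨0, by norm_num⟩
  set S : Set (Euc n × Euc n) :=
    (Metric.closedBall 0 n) ×ˢ (Metric.closedBall 0 n) with hS
  have hSc : IsCompact S :=
    (isCompact_closedBall _ _).prod (isCompact_closedBall _ _)
  have hSne : S.Nonempty := ⟨(0,0), by
    constructor <;> simp [Metric.mem_closedBall]⟩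
  have hmax : ∀ i : Fin m, ∃ p ∈ S, ∀ q ∈ S, F i q.1 q.2 ≤ F i p.1 p.2 := by
    intro i
    obtain ⟨p, hp, hmax⟩ := hSc.exists_isMaxOn hSne (hF i).continuousOn
    exact ⟨p, hp, fun q hq => hmax hq⟩
  choose P hPS hPmax using hmax
  obtain ⟨k, -, hk⟩ := Finset.exists_max_image Finset.univ
    (fun i => F i (P i).1 (P i).2) ⟨⟨0, hm⟩, Finset.mem_univ _⟩
  have hglob : ∀ i x y, F i x y ≤ F k (P k).1 (P k).2 := by
    intro i x y
    obtain ⟨zx, hzx, hzxb⟩ := exists_intvec_cube hn x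
    obtain ⟨zy, hzy, hzyb⟩ := exists_intvec_cube hn y
    have : F i x y = F i (x + zx) (y + zy) := (hper i x y zx zy hzx hzy).symm
    rw [this]
    calc F i (x+zx) (y+zy) ≤ F i (P i).1 (P i).2 := by
          apply hPmax i (x+zx, y+zy)
          exact ⟨by simpa [Metric.mem_closedBall] using hzxb,
                 by simpa [Metric.mem_closedBall] using hzyb⟩
    _ ≤ F k (P k).1 (P k).2 := hk i (Finset.mem_univ _)
  set a := (P k).1
  obtain ⟨z, hz, hzr⟩ := exists_intvec_round a (P k).2
  set b := (P k).2 + z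
  have heq : F k a b = F k a (P k).2 := by
    have := hper k a (P k).2 0 z hiz hz
    simpa [b] using this
  refine ⟨k, a, b, ?_, ?_, hzr, fun i x y => (hglob i x y).trans heq.symm.le⟩
  · have := (hPS k).1; simpa [Metric.mem_closedBall] using this
  · have hb1 : ‖a‖ ≤ n := by have := (hPS k).1; simpa [Metric.mem_closedBall] using this
    have hab : ‖a - b‖ ≤ Real.sqrt n * (1/2) := norm_le_of_coords (a - b) (1/2) (by norm_num)
      (fun j => hzr j)
    have h2 : ‖b‖ ≤ ‖a‖ + ‖a - b‖ := by
      have hb : b = a - (a - b) := (sub_sub_cancel a b).symm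
      calc ‖b‖ = ‖a - (a - b)‖ := by rw [← hb]
      _ ≤ ‖a‖ + ‖a - b‖ := norm_sub_le _ _
    have hs : Real.sqrt n * (1/2) ≤ n := by
      have := sqrt_nat_le hn
      have hn1 : (1:ℝ) ≤ n := by exact_mod_cast hn
      nlinarith [Real.sqrt_nonneg (n:ℝ)]
    linarith

/-- Uniform-continuity modulus on a compact set, uniform in the `Ξ` variable. -/
lemma unif_mod {n : ℕ} {Ξ : Type*} [MetricSpace Ξ] [CompactSpace Ξ] {E : Type*}
    [PseudoMetricSpace E] (f : Euc n × Ξ → E) (hf : Continuous f)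
    (K : Set (Euc n)) (hK : IsCompact K) {ε : ℝ} (hε : 0 < ε) :
    ∃ δ > 0, ∀ a ∈ K, ∀ b ∈ K, dist a b < δ → ∀ ξ : Ξ, dist (f (a,ξ)) (f (b,ξ)) ≤ ε := by
  have hc : IsCompact (K ×ˢ (Set.univ : Set Ξ)) := hK.prod isCompact_univ
  have huc := hc.uniformContinuousOn_of_continuous hf.continuousOn
  rw [Metric.uniformContinuousOn_iff] at huc
  obtain ⟨δ, hδ, h⟩ := huc ε hε
  refine ⟨δ, hδ, fun a ha b hb hab ξ => ?_⟩
  have := h (a, ξ) ⟨ha, Set.mem_univ _⟩ (b, ξ) ⟨hb, Set.mem_univ _⟩ ?_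
  · exact this.le
  · rw [Prod.dist_eq]
    have hx : dist ξ ξ = 0 := dist_self ξ
    rw [hx]
    exact lt_of_le_of_lt (max_le (le_refl _) dist_nonneg) hab

lemma ham_bddAbove {n m : ℕ} {Ξ : Type*} [MetricSpace Ξ] [CompactSpace Ξ] [Nonempty Ξ]
    (g : Fin m → Euc n × Ξ → Euc n) (L : Fin m → Euc n × Ξ → ℝ)
    (hg : ∀ i, Continuous (g i)) (hL : ∀ i, Continuous (L i)) (i : Fin m) (x p : Euc n) :
    BddAbove (Set.range fun ξ : Ξ => -⟪g i (x, ξ), p⟫ - L i (x, ξ)) := by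
  have hcont : Continuous fun ξ : Ξ => -⟪g i (x, ξ), p⟫ - L i (x, ξ) := by
    apply Continuous.sub
    · exact (((hg i).comp (Continuous.prodMk_right x)).inner continuous_const).neg
    · exact (hL i).comp (Continuous.prodMk_right x)
  have := (isCompact_univ.image hcont).bddAbove
  rwa [Set.image_univ] at this

lemma le_ham {n m : ℕ} {Ξ : Type*} [MetricSpace Ξ] [CompactSpace Ξ] [Nonempty Ξ]
    (g : Fin m → Euc n × Ξ → Euc n) (L : Fin m → Euc n × Ξ → ℝ)
    (hg : ∀ i, Continuous (g i)) (hL : ∀ i, Continuous (L i)) (i : Fin m) (x p : Euc n)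
    (ξ : Ξ) : -⟪g i (x, ξ), p⟫ - L i (x, ξ) ≤ ham g L i x p :=
  le_ciSup (ham_bddAbove g L hg hL i x p) ξ

lemma ham_diff {n m : ℕ} {Ξ : Type*} [MetricSpace Ξ] [CompactSpace Ξ] [Nonempty Ξ]
    (g : Fin m → Euc n × Ξ → Euc n) (L : Fin m → Euc n × Ξ → ℝ)
    (hg : ∀ i, Continuous (g i)) (hL : ∀ i, Continuous (L i)) (i : Fin m) (a b p : Euc n)
    {εg εL : ℝ}
    (h1 : ∀ ξ, ‖g i (a, ξ) - g i (b, ξ)‖ ≤ εg) (h2 : ∀ ξ, |L i (a, ξ) - L i (b, ξ)| ≤ εL) :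
    ham g L i a p ≤ ham g L i b p + εg * ‖p‖ + εL := by
  apply ciSup_le
  intro ξ
  have key : -⟪g i (a, ξ), p⟫ - L i (a, ξ) =
      (-⟪g i (b, ξ), p⟫ - L i (b, ξ)) + ⟪g i (b, ξ) - g i (a, ξ), p⟫
        + (L i (b, ξ) - L i (a, ξ)) := by
    rw [inner_sub_left]; ring
  rw [key]
  have hb := le_ham g L hg hL i b p ξ
  have hi : ⟪g i (b, ξ) - g i (a, ξ), p⟫ ≤ εg * ‖p‖ := by
    calc ⟪g i (b, ξ) - g i (a, ξ), p⟫ ≤ ‖g i (b, ξ) - g i (a, ξ)‖ * ‖p‖ :=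
          real_inner_le_norm _ _
    _ ≤ εg * ‖p‖ := by
        apply mul_le_mul_of_nonneg_right _ (norm_nonneg p)
        rw [norm_sub_rev]; exact h1 ξ
  have hl : L i (b, ξ) - L i (a, ξ) ≤ εL := by
    have := h2 ξ; rw [abs_sub_comm] at this; exact (abs_le.mp this).2
  linarith

end Stmt14Aux

end Aux



set_option maxHeartbeats 3000000 in
open Stmt14Aux in
/-- Core comparison lemma between a subsolution and a supersolution, one of which is
Lipschitz and bounded, for `B^λ`-type problems. -/
lemma stmt14_comparison {n m : ℕ} (hn : 0 < n) (hm : 0 < m)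
    {Ξ : Type*} [MetricSpace Ξ] [CompactSpace Ξ] [Nonempty Ξ]
    (g : Fin m → Euc n × Ξ → Euc n) (L : Fin m → Euc n × Ξ → ℝ)
    (hgc : ∀ i, Continuous (g i)) (hLc : ∀ i, Continuous (L i))
    (B : Euc n → Matrix (Fin m) (Fin m) ℝ) (hB : GoodCoupling B)
    (lam lu lw : ℝ) (hlam : 0 < lam)
    (u w : Fin m → Euc n → ℝ)
    (hu : IsSubsol B lu g L (fun _ => 0) u) (hw : IsSupersol B lw g L (fun _ => 0) w)
    (huc : ∀ i, Continuous (u i)) (hwc : ∀ i, Continuous (w i))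
    (K C₁ : ℝ) (hK : 0 ≤ K) (hC₁ : 1 ≤ C₁)
    (hcase : (lu = lam ∧ lw = 0 ∧ (∀ i, LipschitzWith (Real.toNNReal K) (w i)) ∧
                (∀ i y, |w i y| ≤ C₁))
           ∨ (lu = 0 ∧ lw = lam ∧ (∀ i, LipschitzWith (Real.toNNReal K) (u i)) ∧
                (∀ i x, |u i x| ≤ C₁))) :
    ∀ i x, u i x ≤ w i x + C₁ := by
  by_contra hcon
  push_neg at hcon
  obtain ⟨i₀, x₀, hx₀⟩ := hcon
  set s : ℝ := u i₀ x₀ - w i₀ x₀ - C₁ with hs_def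
  have hspos : 0 < s := by simp only [hs_def]; linarith
  have hls : 0 < lam * s := mul_pos hlam hspos
  -- the small parameters
  set P : ℝ := Real.pi^2 * K / 2 + 1 with hP_def
  have hP : 0 < P := by positivity
  have hmC : (0:ℝ) < m * C₁ + 1 := by positivity
  set εB : ℝ := lam * s / (4 * (m * C₁ + 1)) with hεB_def
  set εg : ℝ := lam * s / (4 * P) with hεg_def
  set εL : ℝ := lam * s / 4 with hεL_def
  have hεB : 0 < εB := by positivity
  have hεg : 0 < εg := by positivity
  have hεL : 0 < εL := by positivity
  -- compact reference set and moduli of continuity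
  set KS : Set (Euc n) := Metric.closedBall 0 (2*n) with hKS_def
  have hKSc : IsCompact KS := isCompact_closedBall _ _
  obtain ⟨δB, hδB, hmodB⟩ := unif_mod (Ξ := Ξ) (E := Fin m × Fin m → ℝ)
    (fun q => fun ij => B q.1 ij.1 ij.2)
    (continuous_pi fun ij => ((hB.1 ij.1 ij.2).1).comp continuous_fst) KS hKSc hεB
  obtain ⟨δg, hδg, hmodg⟩ := unif_mod (E := Fin m → Euc n)
    (fun q => fun i => g i q) (continuous_pi fun i => hgc i) KS hKSc hεg
  obtain ⟨δL, hδL, hmodL⟩ := unif_mod (E := Fin m → ℝ)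
    (fun q => fun i => L i q) (continuous_pi fun i => hLc i) KS hKSc hεL
  set δ : ℝ := min δB (min δg δL) with hδ_def
  have hδ : 0 < δ := lt_min hδB (lt_min hδg hδL)
  set δ' : ℝ := min δ 1 with hδ'_def
  have hδ' : 0 < δ' := lt_min hδ one_pos
  -- the doubling parameter
  set α : ℝ := Real.pi^2 * (K+1) / (4*δ') + 1 with hα_def
  have hα : 0 < α := by positivity
  set D : ℝ := Real.pi^2 * K / (4*α) with hD_def
  have hD0 : 0 ≤ D := by positivity
  have hDδ : D < δ' := by
    rw [hD_def, div_lt_iff₀ (by positivity)]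
    have h4 : 4*α*δ' = Real.pi^2*(K+1) + 4*δ' := by
      rw [hα_def]; field_simp
    have hpi2 : (0:ℝ) < Real.pi^2 := by positivity
    calc Real.pi^2 * K < Real.pi^2*(K+1) + 4*δ' := by nlinarith
    _ = δ' * (4*α) := by linarith [h4]
  clear_value s P εB εg εL δ δ' α D
  -- the doubling functional and its maximum point
  have hFcont : ∀ i, Continuous fun p : Euc n × Euc n =>
      u i p.1 - w i p.2 - tf α p.2 p.1 := by
    intro i
    apply Continuous.sub
    · exact ((huc i).comp continuous_fst).sub ((hwc i).comp continuous_snd)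
    · show Continuous fun p : Euc n × Euc n => α * ∑ j, pen (p.1 j - p.2 j)
      apply continuous_const.mul
      apply continuous_finset_sum
      intro j _
      exact pen_contDiff.continuous.comp
        (((EuclideanSpace.proj j).continuous.comp continuous_fst).sub
          ((EuclideanSpace.proj j).continuous.comp continuous_snd))
  have hFper : ∀ i x y zx zy, IsIntVec zx → IsIntVec zy →
      u i (x+zx) - w i (y+zy) - tf α (y+zy) (x+zx) = u i x - w i y - tf α y x := by
    intro i x y zx zy hzx hzy
    have h1 := (hu.1 i).2 x zx hzx
    have h2 := (hw.1 i).2 y zy hzy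
    have h3 : tf α (y+zy) (x+zx) = tf α y x := by
      unfold tf
      congr 1
      apply Finset.sum_congr rfl
      intro j _
      obtain ⟨kx, hkx⟩ := hzx j
      obtain ⟨ky, hky⟩ := hzy j
      have he : (x+zx) j - (y+zy) j = (x j - y j) + ((kx - ky : ℤ) : ℝ) := by
        show x j + zx j - (y j + zy j) = _
        rw [hkx, hky]; push_cast; ring
      rw [he, pen_int]
    rw [h1, h2, h3]
  obtain ⟨k, a, b, hna, hnb, hhalf, hmaxg'⟩ := exists_global_max hn hm
    (fun i x y => u i x - w i y - tf α y x) hFcont hFper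
  have hmaxg : ∀ i x y, u i x - w i y - tf α y x ≤ u k a - w k b - tf α b a := hmaxg'
  -- basic consequences of maximality
  have htf_diag : ∀ c : Euc n, tf α c c = 0 := by
    intro c; unfold tf
    have h0 : ∀ j : Fin n, pen (c j - c j) = 0 := by
      intro j; rw [sub_self]; exact pen_zero
    rw [Finset.sum_congr rfl fun j _ => h0 j]
    simp
  have htf_nonneg : 0 ≤ tf α b a := by
    apply mul_nonneg hα.le
    exact Finset.sum_nonneg fun j _ => pen_nonneg _
  have hrk : C₁ + s ≤ u k a - w k b := by
    have h0 := hmaxg i₀ x₀ x₀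
    rw [htf_diag x₀] at h0
    have : C₁ + s = u i₀ x₀ - w i₀ x₀ := by rw [hs_def]; ring
    linarith
  have hri : ∀ i, u i a - w i b ≤ u k a - w k b := by
    intro i
    have := hmaxg i a b
    linarith
  -- Lipschitz estimate on the penalty
  have hpen_lip : α * (∑ j, pen (a j - b j)) ≤ K * ‖a - b‖ := by
    have hKc : (Real.toNNReal K : ℝ) = K := Real.coe_toNNReal K hK
    have hdn : dist a b = ‖a - b‖ := dist_eq_norm a b
    rcases hcase with ⟨-, -, hlip, -⟩ | ⟨-, -, hlip, -⟩
    · have h1 := hmaxg k a a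
      rw [htf_diag a] at h1
      have h3 : w k a - w k b ≤ K * ‖a - b‖ := by
        have h4 := (hlip k).dist_le_mul a b
        rw [hKc, hdn, Real.dist_eq] at h4
        exact (le_abs_self _).trans h4
      have h5 : tf α b a = α * ∑ j, pen (a j - b j) := rfl
      linarith
    · have h1 := hmaxg k b b
      rw [htf_diag b] at h1
      have h3 : u k a - u k b ≤ K * ‖a - b‖ := by
        have h4 := (hlip k).dist_le_mul a b
        rw [hKc, hdn, Real.dist_eq] at h4
        exact (le_abs_self _).trans h4
      have h5 : tf α b a = α * ∑ j, pen (a j - b j) := rfl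
      linarith
  have hsum_lb : 4/Real.pi^2 * ‖a - b‖^2 ≤ ∑ j, pen (a j - b j) := by
    rw [norm_sq_eq_sum, Finset.mul_sum]
    apply Finset.sum_le_sum
    intro j _
    have : (a - b) j = a j - b j := rfl
    rw [this]
    exact pen_lb (hhalf j)
  have hab_le : ‖a - b‖ ≤ D := by
    by_cases hz : ‖a - b‖ = 0
    · rw [hz]; exact hD0
    · have hN : 0 < ‖a - b‖ := lt_of_le_of_ne (norm_nonneg _) (Ne.symm hz)
      have hpi2 : (0:ℝ) < Real.pi^2 := by positivity
      have hchain : α * (4/Real.pi^2 * ‖a - b‖^2) ≤ K * ‖a - b‖ :=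
        (mul_le_mul_of_nonneg_left hsum_lb hα.le).trans hpen_lip
      have key : 4*α*‖a - b‖^2 ≤ Real.pi^2*K*‖a - b‖ := by
        have h1 : Real.pi^2 * (α * (4/Real.pi^2 * ‖a - b‖^2)) = 4*α*‖a - b‖^2 := by
          field_simp
        have h2 : Real.pi^2 * (K * ‖a - b‖) = Real.pi^2*K*‖a - b‖ := by ring
        have h3 := mul_le_mul_of_nonneg_left hchain hpi2.le
        rw [h1, h2] at h3
        exact h3
      rw [hD_def, le_div_iff₀ (by linarith : (0:ℝ) < 4*α)]
      calc ‖a - b‖ * (4*α) = (4*α*‖a - b‖^2)/‖a - b‖ := by field_simp [hz]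
      _ ≤ (Real.pi^2*K*‖a - b‖)/‖a - b‖ := (div_le_div_iff_of_pos_right hN).mpr key
      _ = Real.pi^2*K := by field_simp [hz]
  have habδ : dist a b < δ := by
    rw [dist_eq_norm]
    calc ‖a - b‖ ≤ D := hab_le
    _ < δ' := hDδ
    _ ≤ δ := by rw [hδ'_def]; exact min_le_left _ _
  have habB : dist b a < δB := by
    rw [dist_comm]
    exact habδ.trans_le (by rw [hδ_def]; exact min_le_left _ _)
  have habg : dist b a < δg := by
    rw [dist_comm]
    exact habδ.trans_le (by
      rw [hδ_def]; exact (min_le_right _ _).trans (min_le_left _ _))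
  have habL : dist b a < δL := by
    rw [dist_comm]
    exact habδ.trans_le (by
      rw [hδ_def]; exact (min_le_right _ _).trans (min_le_right _ _))
  have haK : a ∈ KS := by
    rw [hKS_def, Metric.mem_closedBall, dist_zero_right]
    have : (n:ℝ) ≤ 2*n := by
      have : (0:ℝ) ≤ n := Nat.cast_nonneg n
      linarith
    linarith
  have hbK : b ∈ KS := by
    rw [hKS_def, Metric.mem_closedBall, dist_zero_right]; exact hnb
  -- the common gradient
  set p : Euc n := tg α b a with hp_def
  have hpnorm : ‖p‖ ≤ Real.pi^2 * K / 2 := by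
    have hsin : ∀ t : ℝ, (Real.sin (2*Real.pi*t)/Real.pi)^2 ≤ 4*t^2 := by
      intro t
      have h := pen_deriv_abs t
      have h2 : |Real.sin (2*Real.pi*t)/Real.pi|^2 ≤ (2*|t|)^2 :=
        pow_le_pow_left₀ (abs_nonneg _) h 2
      calc (Real.sin (2*Real.pi*t)/Real.pi)^2 = |Real.sin (2*Real.pi*t)/Real.pi|^2 :=
            (sq_abs _).symm
      _ ≤ (2*|t|)^2 := h2
      _ = 4*t^2 := by rw [mul_pow, sq_abs]; norm_num
    have hp2 : ‖p‖^2 ≤ (2*α*‖a - b‖)^2 := by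
      rw [norm_sq_eq_sum]
      have hterm : ∀ j : Fin n, (p j)^2 ≤ α^2 * (4*(a j - b j)^2) := by
        intro j
        have : p j = α * (Real.sin (2*Real.pi*(a j - b j))/Real.pi) := rfl
        rw [this, mul_pow]
        exact mul_le_mul_of_nonneg_left (hsin _) (sq_nonneg α)
      calc ∑ j, (p j)^2 ≤ ∑ j, α^2 * (4*(a j - b j)^2) :=
            Finset.sum_le_sum fun j _ => hterm j
      _ = 4*α^2 * ∑ j, (a j - b j)^2 := by
          rw [Finset.mul_sum]
          exact Finset.sum_congr rfl fun j _ => by ring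
      _ = (2*α*‖a - b‖)^2 := by
          have hnab : ∑ j, (a j - b j)^2 = ‖a - b‖^2 := by
            rw [norm_sq_eq_sum]
            rfl
          rw [hnab]
          ring
    have h2α : (0:ℝ) ≤ 2*α*‖a - b‖ := mul_nonneg (by linarith) (norm_nonneg _)
    have hple : ‖p‖ ≤ 2*α*‖a - b‖ := by
      have := Real.sqrt_le_sqrt hp2
      rwa [Real.sqrt_sq (norm_nonneg p), Real.sqrt_sq h2α] at this
    calc ‖p‖ ≤ 2*α*‖a - b‖ := hple
    _ ≤ 2*α*D := mul_le_mul_of_nonneg_left hab_le (by linarith)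
    _ = Real.pi^2 * K / 2 := by
        rw [hD_def]; field_simp; ring
  -- modulus bounds at a, b
  have hξ : Nonempty Ξ := inferInstance
  have hBb : ∀ i j, |B b i j - B a i j| ≤ εB := by
    intro i j
    have h1 := hmodB b hbK a haK habB (Classical.arbitrary Ξ)
    have h2 := dist_le_pi_dist (fun ij : Fin m × Fin m => B b ij.1 ij.2)
      (fun ij : Fin m × Fin m => B a ij.1 ij.2) (i, j)
    rw [Real.dist_eq] at h2
    exact h2.trans h1
  have hgb : ∀ ξ, ‖g k (b, ξ) - g k (a, ξ)‖ ≤ εg := by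
    intro ξ
    have h1 := hmodg b hbK a haK habg ξ
    have h2 := dist_le_pi_dist (fun i => g i (b, ξ)) (fun i => g i (a, ξ)) k
    rw [dist_eq_norm] at h2
    exact h2.trans h1
  have hLb : ∀ ξ, |L k (b, ξ) - L k (a, ξ)| ≤ εL := by
    intro ξ
    have h1 := hmodL b hbK a haK habL ξ
    have h2 := dist_le_pi_dist (fun i => L i (b, ξ)) (fun i => L i (a, ξ)) k
    rw [Real.dist_eq] at h2
    exact h2.trans h1
  -- viscosity subsolution test at a
  have hlocmax : IsLocalMax (fun y => u k y - tf α b y) a := by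
    apply Filter.Eventually.of_forall
    intro x
    have := hmaxg k x b
    show u k x - tf α b x ≤ u k a - tf α b a
    linarith
  have hsub : lu * u k a + (∑ j, B a k j * u j a) + ham g L k a p ≤ 0 := by
    have h := hu.2 k (tf α b) (tf_contDiff α b) (tf_torus α b) a hlocmax
    rwa [(tf_hasGradientAt α b a).gradient] at h
  -- viscosity supersolution test at b
  have hψ₂eq : ∀ y : Euc n, tf α y a = -(tf (-α) a y) := by
    intro y
    unfold tf
    have : ∀ j : Fin n, pen (a j - y j) = pen (y j - a j) := by
      intro j
      rw [show a j - y j = -(y j - a j) by ring, pen_even]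
    rw [Finset.sum_congr rfl fun j _ => this j]
    ring
  have hlocmin : IsLocalMin (fun y => w k y - tf (-α) a y) b := by
    apply Filter.Eventually.of_forall
    intro y
    have h1 := hmaxg k a y
    have h2 := hψ₂eq y
    have h3 := hψ₂eq b
    show w k b - tf (-α) a b ≤ w k y - tf (-α) a y
    linarith
  have hgrad2 : gradient (tf (-α) a) b = p := by
    rw [(tf_hasGradientAt (-α) a b).gradient]
    show tg (-α) a b = tg α b a
    unfold tg
    congr 1
    funext j
    show (-α) * (Real.sin (2*Real.pi*(b j - a j))/Real.pi)
        = α * (Real.sin (2*Real.pi*(a j - b j))/Real.pi)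
    rw [show b j - a j = -(a j - b j) by ring, mul_neg, Real.sin_neg]
    ring
  have hsup : 0 ≤ lw * w k b + (∑ j, B b k j * w j b) + ham g L k b p := by
    have h := hw.2 k (tf (-α) a) (tf_contDiff (-α) a) (tf_torus (-α) a) b hlocmin
    rwa [hgrad2] at h
  -- Hamiltonian difference
  have hhd : ham g L k b p ≤ ham g L k a p + εg * ‖p‖ + εL :=
    ham_diff g L hgc hLc k b a p hgb hLb
  -- numeric bounds common to both cases
  have hεgP : εg * ‖p‖ ≤ lam * s / 4 := by
    calc εg * ‖p‖ ≤ εg * P := by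
          apply mul_le_mul_of_nonneg_left _ hεg.le
          rw [hP_def]; linarith [hpnorm]
    _ = lam * s / 4 := by rw [hεg_def]; field_simp [hP.ne']
  have hεBm : (m:ℝ) * εB * C₁ ≤ lam * s / 4 := by
    have h1 : (m:ℝ)*C₁ ≤ m*C₁+1 := by linarith
    have h2 : εB * ((m:ℝ)*C₁) ≤ εB * ((m:ℝ)*C₁+1) := mul_le_mul_of_nonneg_left h1 hεB.le
    have h3 : εB * ((m:ℝ)*C₁+1) = lam*s/4 := by
      rw [hεB_def]; field_simp [hmC.ne']
    calc (m:ℝ)*εB*C₁ = εB*((m:ℝ)*C₁) := by ring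
    _ ≤ εB*((m:ℝ)*C₁+1) := h2
    _ = lam*s/4 := h3
  -- final contradiction, in both cases
  rcases hcase with ⟨hlu, hlw, -, hbound⟩ | ⟨hlu, hlw, -, hbound⟩
  · -- lu = lam, lw = 0, w bounded
    have hmono := hB.2 a (fun i => u i a - w i b) k hri
      (by show (0:ℝ) ≤ u k a - w k b; linarith)
    have hBu : ∑ j, B a k j * w j b ≤ ∑ j, B a k j * u j a := by
      have he : ∑ j, B a k j * (u j a - w j b)
          = ∑ j, B a k j * u j a - ∑ j, B a k j * w j b := by
        rw [← Finset.sum_sub_distrib]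
        exact Finset.sum_congr rfl fun j _ => by ring
      rw [he] at hmono
      linarith
    have hBB : ∑ j, B b k j * w j b - ∑ j, B a k j * w j b ≤ m * εB * C₁ := by
      have he : ∑ j, B b k j * w j b - ∑ j, B a k j * w j b
          = ∑ j, (B b k j - B a k j) * w j b := by
        rw [← Finset.sum_sub_distrib]
        exact Finset.sum_congr rfl fun j _ => by ring
      rw [he]
      calc ∑ j, (B b k j - B a k j) * w j b ≤ ∑ _j : Fin m, εB * C₁ := by
            apply Finset.sum_le_sum
            intro j _
            calc (B b k j - B a k j) * w j b ≤ |(B b k j - B a k j) * w j b| :=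
                  le_abs_self _
            _ = |B b k j - B a k j| * |w j b| := abs_mul _ _
            _ ≤ εB * C₁ := mul_le_mul (hBb k j) (hbound j b) (abs_nonneg _) hεB.le
      _ = m * εB * C₁ := by
            rw [Finset.sum_const, Finset.card_univ, Fintype.card_fin, nsmul_eq_mul]; ring
    rw [hlu] at hsub
    rw [hlw] at hsup
    have h1 : lam * u k a ≤ m * εB * C₁ + εg * ‖p‖ + εL := by linarith
    have h2 : lam * s ≤ lam * u k a := by
      have hwb : -C₁ ≤ w k b := (abs_le.mp (hbound k b)).1
      have hsu : s ≤ u k a := by linarith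
      exact mul_le_mul_of_nonneg_left hsu hlam.le
    rw [hεL_def] at h1
    linarith
  · -- lu = 0, lw = lam, u bounded
    have hmono := hB.2 b (fun i => u i a - w i b) k hri
      (by show (0:ℝ) ≤ u k a - w k b; linarith)
    have hBu : ∑ j, B b k j * w j b ≤ ∑ j, B b k j * u j a := by
      have he : ∑ j, B b k j * (u j a - w j b)
          = ∑ j, B b k j * u j a - ∑ j, B b k j * w j b := by
        rw [← Finset.sum_sub_distrib]
        exact Finset.sum_congr rfl fun j _ => by ring
      rw [he] at hmono
      linarith
    have hBB : ∑ j, B b k j * u j a - ∑ j, B a k j * u j a ≤ m * εB * C₁ := by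
      have he : ∑ j, B b k j * u j a - ∑ j, B a k j * u j a
          = ∑ j, (B b k j - B a k j) * u j a := by
        rw [← Finset.sum_sub_distrib]
        exact Finset.sum_congr rfl fun j _ => by ring
      rw [he]
      calc ∑ j, (B b k j - B a k j) * u j a ≤ ∑ _j : Fin m, εB * C₁ := by
            apply Finset.sum_le_sum
            intro j _
            calc (B b k j - B a k j) * u j a ≤ |(B b k j - B a k j) * u j a| :=
                  le_abs_self _
            _ = |B b k j - B a k j| * |u j a| := abs_mul _ _
            _ ≤ εB * C₁ := mul_le_mul (hBb k j) (hbound j a) (abs_nonneg _) hεB.le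
      _ = m * εB * C₁ := by
            rw [Finset.sum_const, Finset.card_univ, Fintype.card_fin, nsmul_eq_mul]; ring
    rw [hlu] at hsub
    rw [hlw] at hsup
    have h1 : -(lam * w k b) ≤ m * εB * C₁ + εg * ‖p‖ + εL := by linarith
    have h2 : lam * s ≤ -(lam * w k b) := by
      have hua : u k a ≤ C₁ := (abs_le.mp (hbound k a)).2
      have hws : w k b ≤ -s := by linarith
      have := mul_le_mul_of_nonneg_left hws hlam.le
      linarith
    rw [hεL_def] at h1
    linarith


open Stmt14Aux in
theorem stmt14 {n m : ℕ} (hn : 0 < n) (hm : 0 < m)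
    {Ξ : Type*} [MetricSpace Ξ] [CompactSpace Ξ] [Nonempty Ξ]
    (g : Fin m → Euc n × Ξ → Euc n) (L : Fin m → Euc n × Ξ → ℝ)
    (hgL : GoodData g L) (hcoer : Coercive g L)
    (B : Euc n → Matrix (Fin m) (Fin m) ℝ) (hB : GoodCoupling B)
    (hE : AssumptionE B g L)
    (v : ℝ → Fin m → Euc n → ℝ)
    (hv : ∀ lam : ℝ, 0 < lam → IsSol B lam g L (fun _ => 0) (v lam)) :
    ∃ C0 : ℝ, 0 < C0 ∧ ∀ lam : ℝ, 0 < lam →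
      ∀ (x : Euc n) (i : Fin m), |v lam i x| ≤ C0 := by
  obtain ⟨v₀, hv₀lip, hv₀sol⟩ := hE
  choose Kf hKf using hv₀lip
  set K : ℝ := ∑ i, (Kf i : ℝ) with hKdef
  have hK0 : 0 ≤ K := Finset.sum_nonneg fun i _ => (Kf i).coe_nonneg
  have hlipK : ∀ i, LipschitzWith (Real.toNNReal K) (v₀ i) := by
    intro i
    apply (hKf i).weaken
    rw [← NNReal.coe_le_coe, Real.coe_toNNReal K hK0]
    exact Finset.single_le_sum (fun j _ => (Kf j).coe_nonneg) (Finset.mem_univ i)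
  set C₁ : ℝ := 1 + (∑ i, |v₀ i 0|) + K * n with hC₁def
  have hsum0 : 0 ≤ ∑ i, |v₀ i 0| := Finset.sum_nonneg fun i _ => abs_nonneg _
  have hKn : 0 ≤ K * n := mul_nonneg hK0 (Nat.cast_nonneg n)
  have hC₁1 : 1 ≤ C₁ := by rw [hC₁def]; linarith
  have hbound : ∀ i x, |v₀ i x| ≤ C₁ := by
    intro i x
    obtain ⟨z, hz, hnz⟩ := Stmt14Aux.exists_intvec_cube hn x
    have hper := ((hv₀sol.2.1).1 i).2 x z hz
    have hd : |v₀ i (x+z) - v₀ i 0| ≤ K * n := by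
      have h1 := (hlipK i).dist_le_mul (x+z) 0
      rw [Real.coe_toNNReal K hK0, Real.dist_eq, dist_zero_right] at h1
      exact h1.trans (mul_le_mul_of_nonneg_left hnz hK0)
    have h0 : |v₀ i 0| ≤ ∑ i, |v₀ i 0| :=
      Finset.single_le_sum (f := fun j => |v₀ j 0|) (fun j _ => abs_nonneg _)
        (Finset.mem_univ i)
    calc |v₀ i x| = |v₀ i (x+z)| := by rw [hper]
    _ = |(v₀ i (x+z) - v₀ i 0) + v₀ i 0| := by ring_nf
    _ ≤ |v₀ i (x+z) - v₀ i 0| + |v₀ i 0| := abs_add_le _ _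
    _ ≤ C₁ := by rw [hC₁def]; linarith
  refine ⟨2*C₁, by linarith, ?_⟩
  intro lam hlam x i
  have hsol := hv lam hlam
  have hup : ∀ i x, v lam i x ≤ v₀ i x + C₁ :=
    stmt14_comparison hn hm g L (fun i => (hgL.1 i).1) (fun i => (hgL.2 i).1) B hB
      lam lam 0 hlam (v lam) v₀ hsol.2.1 hv₀sol.2.2 hsol.1 hv₀sol.1 K C₁ hK0 hC₁1
      (Or.inl ⟨rfl, rfl, hlipK, fun i y => hbound i y⟩)
  have hlo : ∀ i x, v₀ i x ≤ v lam i x + C₁ :=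
    stmt14_comparison hn hm g L (fun i => (hgL.1 i).1) (fun i => (hgL.2 i).1) B hB
      lam 0 lam hlam v₀ (v lam) hv₀sol.2.1 hsol.2.2 hv₀sol.1 hsol.1 K C₁ hK0 hC₁1
      (Or.inr ⟨rfl, rfl, hlipK, fun i y => hbound i y⟩)
  have h1 := hup i x
  have h2 := hlo i x
  obtain ⟨h3l, h3r⟩ := abs_le.mp (hbound i x)
  rw [abs_le]
  constructor <;> linarith
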